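/- arXiv:0909.3740 — 6 statements merged into one kernel-verified Lean document; each statement's English description precedes it below -/
import Mathlib

section
/- Let ω be a skew-symmetric bilinear form on a dendriform algebra (A,≻,≺). Then: (1) ω is invariant if and only if ω satisfies ω(x≻y,z) = ω(y, z*x) for all x,y,z ∈ A together with the cyclic identity ω(x≻y,z) + ω(y≻z,x) + ω(z≻x,y) = 0 for all x,y,z ∈ A; (2) ω is invariant if and only if ω satisfies ω(x≺y,z) = ω(x, y*z) for all x,y,z ∈ A together with the cyclic identity ω(x≺y,z) + ω(y≺z,x) + ω(z≺x,y) = 0 for all x,y,z ∈ A. -/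
/-- Proposition 3.2.2 (3)–(4): for a skew-symmetric bilinear form `ω` on a dendriform
algebra `(A, ≻, ≺)` (products `succ`, `prec`, with `x * y = x ≻ y + x ≺ y`),
invariance is equivalent to equation (3.2.1) together with the cyclic identity (3.2.4),
and also to equation (3.2.2) together with the cyclic identity (3.2.5). -/
theorem dendriform_skew_invariant_iff_cyclic
    {K A : Type*} [Field K] [CharZero K] [AddCommGroup A] [Module K A]
    (succ prec : A →ₗ[K] A →ₗ[K] A)
    (hd1 : ∀ x y z : A, prec (prec x y) z = prec x (succ y z + prec y z))
    (hd2 : ∀ x y z : A, prec (succ x y) z = succ x (prec y z))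
    (hd3 : ∀ x y z : A, succ x (succ y z) = succ (succ x y + prec x y) z)
    (ω : A →ₗ[K] A →ₗ[K] K)
    (hskew : ∀ x y : A, ω x y = - ω y x) :
    (((∀ x y z : A, ω (succ x y) z = ω y (succ z x + prec z x)) ∧
      (∀ x y z : A, ω (prec x y) z = ω x (succ y z + prec y z))) ↔
     ((∀ x y z : A, ω (succ x y) z = ω y (succ z x + prec z x)) ∧
      (∀ x y z : A, ω (succ x y) z + ω (succ y z) x + ω (succ z x) y = 0))) ∧
    (((∀ x y z : A, ω (succ x y) z = ω y (succ z x + prec z x)) ∧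
      (∀ x y z : A, ω (prec x y) z = ω x (succ y z + prec y z))) ↔
     ((∀ x y z : A, ω (prec x y) z = ω x (succ y z + prec y z)) ∧
      (∀ x y z : A, ω (prec x y) z + ω (prec y z) x + ω (prec z x) y = 0))) := by
  have mapadd : ∀ a b c : A, ω (a + b) c = ω a c + ω b c := fun a b c => by simp
  constructor
  · constructor
    · rintro ⟨h1, h2⟩
      refine ⟨h1, fun x y z => ?_⟩
      have I : ω x (succ y z + prec y z) + ω y (succ z x + prec z x)
          + ω z (succ x y + prec x y) = 0 := by
        have e1 := h1 x y z
        have e2 := h2 x y z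
        have e3 := mapadd (succ x y) (prec x y) z
        have e4 := hskew (succ x y + prec x y) z
        linear_combination -e1 - e2 - e3 + e4
      have a1 := h1 x y z; have a2 := h1 y z x; have a3 := h1 z x y
      linear_combination a1 + a2 + a3 + I
    · rintro ⟨h1, hc⟩
      refine ⟨h1, fun x y z => ?_⟩
      have I : ω x (succ y z + prec y z) + ω y (succ z x + prec z x)
          + ω z (succ x y + prec x y) = 0 := by
        have a1 := h1 x y z; have a2 := h1 y z x; have a3 := h1 z x y
        have := hc x y z
        linear_combination this - a1 - a2 - a3
      have e1 := h1 x y z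
      have e3 := mapadd (succ x y) (prec x y) z
      have e4 := hskew (succ x y + prec x y) z
      linear_combination -e3 + e4 - e1 - I
  · constructor
    · rintro ⟨h1, h2⟩
      refine ⟨h2, fun x y z => ?_⟩
      have I : ω x (succ y z + prec y z) + ω y (succ z x + prec z x)
          + ω z (succ x y + prec x y) = 0 := by
        have e1 := h1 x y z
        have e2 := h2 x y z
        have e3 := mapadd (succ x y) (prec x y) z
        have e4 := hskew (succ x y + prec x y) z
        linear_combination -e1 - e2 - e3 + e4
      have a1 := h2 x y z; have a2 := h2 y z x; have a3 := h2 z x y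
      linear_combination a1 + a2 + a3 + I
    · rintro ⟨h2, hc⟩
      refine ⟨fun x y z => ?_, h2⟩
      have I : ω x (succ y z + prec y z) + ω y (succ z x + prec z x)
          + ω z (succ x y + prec x y) = 0 := by
        have a1 := h2 x y z; have a2 := h2 y z x; have a3 := h2 z x y
        have := hc x y z
        linear_combination this - a1 - a2 - a3
      have e2 := h2 x y z
      have e3 := mapadd (succ x y) (prec x y) z
      have e4 := hskew (succ x y + prec x y) z
      linear_combination -e3 + e4 - e2 - I
end

section
/- Let ω be an invariant skew-symmetric bilinear form on a dendriform algebra (A,≻,≺). Then ω is a Connes cocycle of the associated associative algebra (A,*), i.e. ω(x*y,z) + ω(y*z,x) + ω(z*x,y) = 0 for all x,y,z ∈ A. -/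
/-- Proposition 3.2.2 (5): an invariant skew-symmetric bilinear form `ω` on a dendriform
algebra `(A, ≻, ≺)` is a Connes cocycle of the associated associative algebra
`(A, *)`, where `x * y = x ≻ y + x ≺ y`. -/
theorem dendriform_invariant_skew_form_is_connes_cocycle
    {K A : Type*} [Field K] [CharZero K] [AddCommGroup A] [Module K A]
    (succ prec : A →ₗ[K] A →ₗ[K] A)
    (hd1 : ∀ x y z : A, prec (prec x y) z = prec x (succ y z + prec y z))
    (hd2 : ∀ x y z : A, prec (succ x y) z = succ x (prec y z))
    (hd3 : ∀ x y z : A, succ x (succ y z) = succ (succ x y + prec x y) z)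
    (ω : A →ₗ[K] A →ₗ[K] K)
    (hskew : ∀ x y : A, ω x y = - ω y x)
    (hinv1 : ∀ x y z : A, ω (succ x y) z = ω y (succ z x + prec z x))
    (hinv2 : ∀ x y z : A, ω (prec x y) z = ω x (succ y z + prec y z)) :
    ∀ x y z : A,
      ω (succ x y + prec x y) z + ω (succ y z + prec y z) x
        + ω (succ z x + prec z x) y = 0 := by
  have key : ∀ a b c : A,
      ω (succ a b + prec a b) c
        = ω b (succ c a + prec c a) + ω a (succ b c + prec b c) := by
    intro a b c
    rw [map_add, LinearMap.add_apply, hinv1, hinv2]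
  intro x y z
  have h1 := key x y z
  have h2 := key y z x
  have h3 := key z x y
  have s1 := hskew y (succ z x + prec z x)
  have s2 := hskew x (succ y z + prec y z)
  have s3 := hskew z (succ x y + prec x y)
  linear_combination (h1 + h2 + h3 + 2 * s1 + 2 * s2 + 2 * s3) / 3
end

section
/- Let (A,*) be a finite-dimensional associative algebra over a field of characteristic zero and let ω be a nondegenerate skew-symmetric bilinear form on A. Define bilinear products ≻, ≺ on A by the conditions ω(x≻y,z) = ω(y, z*x) and ω(x≺y,z) = ω(x, y*z) for all x,y,z ∈ A (these determine ≻ and ≺ uniquely by nondegeneracy). Then ω is a Connes cocycle of (A,*) if and only if (A,≻,≺) is a dendriform algebra satisfying x≻y + x≺y = x*y for all x,y ∈ A on which ω is invariant. -/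
/-- Dendriform algebra axioms for a pair of bilinear products `succ` (≻) and `prec` (≺). -/
def IsDendriform {K A : Type*} [Field K] [AddCommGroup A] [Module K A]
    (succ prec : A →ₗ[K] A →ₗ[K] A) : Prop :=
  (∀ x y z : A, prec (prec x y) z = prec x (succ y z + prec y z)) ∧
  (∀ x y z : A, prec (succ x y) z = succ x (prec y z)) ∧
  (∀ x y z : A, succ x (succ y z) = succ (succ x y + prec x y) z)

/-- Corollary 3.2.3: let `(A, *)` (product `mul`) be a finite-dimensional associative
algebra with a nondegenerate skew-symmetric bilinear form `ω`, and let `≻ = succ`,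
`≺ = prec` be the bilinear products determined by `ω(x ≻ y, z) = ω(y, z * x)` and
`ω(x ≺ y, z) = ω(x, y * z)`.  Then `ω` is a Connes cocycle of `(A, *)` if and only if
`(A, ≻, ≺)` is a dendriform algebra with `x ≻ y + x ≺ y = x * y` on which `ω` is
invariant. -/
theorem connes_cocycle_iff_compatible_dendriform_invariant
    {K A : Type*} [Field K] [CharZero K] [AddCommGroup A] [Module K A]
    [FiniteDimensional K A]
    (mul : A →ₗ[K] A →ₗ[K] A)
    (hassoc : ∀ x y z : A, mul (mul x y) z = mul x (mul y z))
    (ω : A →ₗ[K] A →ₗ[K] K)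
    (hskew : ∀ x y : A, ω x y = - ω y x)
    (hnd : ∀ x : A, (∀ y : A, ω x y = 0) → x = 0)
    (succ prec : A →ₗ[K] A →ₗ[K] A)
    (hsucc : ∀ x y z : A, ω (succ x y) z = ω y (mul z x))
    (hprec : ∀ x y z : A, ω (prec x y) z = ω x (mul y z)) :
    (∀ x y z : A, ω (mul x y) z + ω (mul y z) x + ω (mul z x) y = 0) ↔
    (IsDendriform succ prec ∧ (∀ x y : A, succ x y + prec x y = mul x y) ∧
     (∀ x y z : A, ω (succ x y) z = ω y (succ z x + prec z x)) ∧
     (∀ x y z : A, ω (prec x y) z = ω x (succ y z + prec y z))) := by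
  have ext : ∀ a b : A, (∀ w : A, ω a w = ω b w) → a = b := by
    intro a b h
    have h0 : a - b = 0 := hnd _ (fun w => by simp [map_sub, h w])
    exact sub_eq_zero.mp h0
  constructor
  · intro hc
    have hsum : ∀ x y : A, succ x y + prec x y = mul x y := by
      intro x y
      apply ext
      intro w
      have h1 : ω (succ x y + prec x y) w = ω y (mul w x) + ω x (mul y w) := by
        simp [map_add, hsucc, hprec]
      have h := hc x y w
      rw [hskew (mul y w) x, hskew (mul w x) y] at h
      rw [h1]; linear_combination -h
    refine ⟨⟨?_, ?_, ?_⟩, hsum, ?_, ?_⟩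
    · intro x y z
      rw [hsum y z]
      apply ext; intro w
      simp only [hprec, hassoc]
    · intro x y z
      apply ext; intro w
      simp only [hprec, hsucc, hassoc]
    · intro x y z
      rw [hsum x y]
      apply ext; intro w
      simp only [hsucc, hassoc]
    · intro x y z; rw [hsum z x]; exact hsucc x y z
    · intro x y z; rw [hsum y z]; exact hprec x y z
  · rintro ⟨-, hsum, -, -⟩
    intro x y z
    have h1 : ω (mul x y) z = ω y (mul z x) + ω x (mul y z) := by
      rw [← hsum x y]; simp [map_add, hsucc, hprec]
    rw [h1, hskew (mul y z) x, hskew (mul z x) y]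
    ring
end

section
/- Let (A,≻,≺) be a finite-dimensional dendriform algebra with associated associative algebra (A,*), and let r ∈ A⊗A be symmetric. Then the following are equivalent: (1) r is a solution of the D-equation r₁₂*r₁₃ = r₁₃≺r₂₃ + r₂₃≻r₁₂; (2) the induced map r : A* → A satisfies r(a*)*r(b*) = r(R_≺*(r(a*))b* + L_≻*(r(b*))a*) for all a*,b* ∈ A*; (3) r(a*)≻r(b*) = r(R_**(r(a*))b* − L_≺*(r(b*))a*) for all a*,b* ∈ A*; (4) r(a*)≺r(b*) = r(−R_≻*(r(a*))b* + L_**(r(b*))a*) for all a*,b* ∈ A*. -/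
open TensorProduct LinearMap Module

/-- `r₁₂ ∘ r₁₃` for `r ∈ A ⊗ A`: `Σ (aᵢ ∘ aⱼ) ⊗ bᵢ ⊗ bⱼ`. -/
noncomputable def tprod12_13 {K A : Type*} [Field K] [AddCommGroup A] [Module K A]
    (m : A →ₗ[K] A →ₗ[K] A) (r : A ⊗[K] A) : A ⊗[K] (A ⊗[K] A) :=
  (TensorProduct.map (TensorProduct.lift m) LinearMap.id)
    ((TensorProduct.tensorTensorTensorComm K A A A A) (r ⊗ₜ[K] r))

/-- `r₁₃ ∘ r₂₃` for `r ∈ A ⊗ A`: `Σ aᵢ ⊗ aⱼ ⊗ (bᵢ ∘ bⱼ)`. -/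
noncomputable def tprod13_23 {K A : Type*} [Field K] [AddCommGroup A] [Module K A]
    (m : A →ₗ[K] A →ₗ[K] A) (r : A ⊗[K] A) : A ⊗[K] (A ⊗[K] A) :=
  (TensorProduct.assoc K A A A)
    ((TensorProduct.map LinearMap.id (TensorProduct.lift m))
      ((TensorProduct.tensorTensorTensorComm K A A A A) (r ⊗ₜ[K] r)))

/-- `r₂₃ ∘ r₁₂` for `r ∈ A ⊗ A`: `Σ aᵢ ⊗ (aⱼ ∘ bᵢ) ⊗ bⱼ`. -/
noncomputable def tprod23_12 {K A : Type*} [Field K] [AddCommGroup A] [Module K A]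
    (m : A →ₗ[K] A →ₗ[K] A) (r : A ⊗[K] A) : A ⊗[K] (A ⊗[K] A) :=
  (TensorProduct.map LinearMap.id (TensorProduct.comm K A A).toLinearMap)
    ((TensorProduct.assoc K A A A)
      ((TensorProduct.map LinearMap.id (TensorProduct.lift m))
        ((TensorProduct.tensorTensorTensorComm K A A A A)
          ((TensorProduct.map (TensorProduct.comm K A A).toLinearMap LinearMap.id)
            ((TensorProduct.tensorTensorTensorComm K A A A A) (r ⊗ₜ[K] r))))))

/-- The linear map `A* → A` induced by `r ∈ A ⊗ A`, `v* ↦ Σ ⟨v*, bᵢ⟩ aᵢ`. -/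
noncomputable def rmap (K A : Type*) [Field K] [AddCommGroup A] [Module K A] :
    A ⊗[K] A →ₗ[K] Module.Dual K A →ₗ[K] A :=
  (dualTensorHom K (Module.Dual K A) A) ∘ₗ
    (TensorProduct.map (Module.Dual.eval K A) LinearMap.id) ∘ₗ
    (TensorProduct.comm K A A).toLinearMap

/-- Dualization `ρ ↦ ρ*` of an action `ρ : A →ₗ End V`, via transpose:
`⟨ρ*(x) a*, y⟩ = ⟨a*, ρ(x) y⟩`. -/
noncomputable def dualize {K A V : Type*} [Field K] [AddCommGroup A] [Module K A]
    [AddCommGroup V] [Module K V] (ρ : A →ₗ[K] V →ₗ[K] V) :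
    A →ₗ[K] Module.Dual K V →ₗ[K] Module.Dual K V :=
  (Module.Dual.transpose (R := K)) ∘ₗ ρ

section Aux

variable {K A : Type*} [Field K] [AddCommGroup A] [Module K A]

@[simp] lemma rmap_tmul (x y : A) (φ : Dual K A) :
    rmap K A (x ⊗ₜ[K] y) φ = φ y • x := by
  simp [rmap]

@[simp] lemma dualize_apply (ρ : A →ₗ[K] A →ₗ[K] A) (x : A) (φ : Dual K A) (y : A) :
    dualize ρ x φ y = φ (ρ x y) := by
  simp [dualize, Module.Dual.transpose_apply]

/-- The full triple pairing `x ⊗ (y ⊗ z) ↦ f x * g y * h z`. -/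
noncomputable def pair2 (g h : Dual K A) : A ⊗[K] A →ₗ[K] K :=
  TensorProduct.lift ((LinearMap.mul K K).compl₁₂ g h)

noncomputable def pair3 (f g h : Dual K A) : A ⊗[K] (A ⊗[K] A) →ₗ[K] K :=
  TensorProduct.lift ((LinearMap.mul K K).compl₁₂ f (pair2 g h))

@[simp] lemma pair3_tmul (f g h : Dual K A) (x y z : A) :
    pair3 f g h (x ⊗ₜ[K] (y ⊗ₜ[K] z)) = f x * (g y * h z) := by
  simp [pair3, pair2]

/-- Separation: a tensor in `A ⊗ (A ⊗ A)` vanishes iff all triple pairings vanish. -/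
lemma pair3_sep [FiniteDimensional K A] (t : A ⊗[K] (A ⊗[K] A))
    (H : ∀ f g h : Dual K A, pair3 f g h t = 0) : t = 0 := by
  let b := Module.finBasis K A
  let B := b.tensorProduct (b.tensorProduct b)
  have key : ∀ (u : A ⊗[K] (A ⊗[K] A)) i j k,
      pair3 (b.coord i) (b.coord j) (b.coord k) u = B.repr u (i, (j, k)) := by
    intro u i j k
    induction u using TensorProduct.induction_on with
    | zero => simp
    | tmul x u' =>
      induction u' using TensorProduct.induction_on with
      | zero => simp
      | tmul y z =>
        simp [B, Basis.tensorProduct_repr_tmul_apply, Basis.coord_apply, mul_assoc]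
        all_goals first | exact Or.inl trivial | ring1 | (ring_nf; try simp)
      | add u₁ u₂ h₁ h₂ => simp [tmul_add, map_add, Finsupp.add_apply, h₁, h₂]
    | add u₁ u₂ h₁ h₂ => simp [map_add, Finsupp.add_apply, h₁, h₂]
  have hz : ∀ idx, B.repr t idx = 0 := by
    rintro ⟨i, j, k⟩
    rw [← key]
    exact H _ _ _
  have h0 : B.repr t = 0 := Finsupp.ext hz
  exact B.repr.injective (by rw [h0, map_zero])

/- Two-variable computation lemmas: the triple pairing of each of the three tensor
products of `r ⊗ s`, expressed via `rmap` and `dualize`, in three ways (leaving each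
of the three dual slots "free"). -/

-- pattern `f` free
lemma B1 (m : A →ₗ[K] A →ₗ[K] A) (f g h : Dual K A) (r s : A ⊗[K] A) :
    pair3 f g h ((TensorProduct.map (TensorProduct.lift m) LinearMap.id)
      ((TensorProduct.tensorTensorTensorComm K A A A A) (r ⊗ₜ[K] s)))
    = f (m (rmap K A r g) (rmap K A s h)) := by
  induction r using TensorProduct.induction_on with
  | zero => simp
  | tmul x y =>
    induction s using TensorProduct.induction_on with
    | zero => simp
    | tmul z w =>
      simp [tensorTensorTensorComm_tmul]
      all_goals first | exact Or.inl trivial | ring1 | (ring_nf; try simp)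
    | add s₁ s₂ h₁ h₂ => simp [tmul_add, map_add, LinearMap.add_apply, h₁, h₂]
  | add r₁ r₂ h₁ h₂ => simp [add_tmul, map_add, LinearMap.add_apply, h₁, h₂]

lemma B2 (m : A →ₗ[K] A →ₗ[K] A) (f g h : Dual K A) (r s : A ⊗[K] A) :
    pair3 f g h ((TensorProduct.assoc K A A A)
      ((TensorProduct.map LinearMap.id (TensorProduct.lift m))
        ((TensorProduct.tensorTensorTensorComm K A A A A) (r ⊗ₜ[K] s))))
    = f (rmap K A r (dualize m.flip (rmap K A ((TensorProduct.comm K A A) s) g) h)) := by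
  induction r using TensorProduct.induction_on with
  | zero => simp
  | tmul x y =>
    induction s using TensorProduct.induction_on with
    | zero => simp
    | tmul z w =>
      simp [tensorTensorTensorComm_tmul]
      all_goals first | exact Or.inl trivial | ring1 | (ring_nf; try simp)
    | add s₁ s₂ h₁ h₂ => simp [tmul_add, map_add, LinearMap.add_apply, h₁, h₂]
  | add r₁ r₂ h₁ h₂ => simp [add_tmul, map_add, LinearMap.add_apply, h₁, h₂]

lemma B3 (m : A →ₗ[K] A →ₗ[K] A) (f g h : Dual K A) (r s : A ⊗[K] A) :
    pair3 f g h ((TensorProduct.map LinearMap.id (TensorProduct.comm K A A).toLinearMap)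
      ((TensorProduct.assoc K A A A)
        ((TensorProduct.map LinearMap.id (TensorProduct.lift m))
          ((TensorProduct.tensorTensorTensorComm K A A A A)
            ((TensorProduct.map (TensorProduct.comm K A A).toLinearMap LinearMap.id)
              ((TensorProduct.tensorTensorTensorComm K A A A A) (r ⊗ₜ[K] s)))))))
    = f (rmap K A s (dualize m (rmap K A r h) g)) := by
  induction r using TensorProduct.induction_on with
  | zero => simp
  | tmul x y =>
    induction s using TensorProduct.induction_on with
    | zero => simp
    | tmul z w =>
      simp [tensorTensorTensorComm_tmul]
      all_goals first | exact Or.inl trivial | ring1 | (ring_nf; try simp)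
    | add s₁ s₂ h₁ h₂ => simp [tmul_add, map_add, LinearMap.add_apply, h₁, h₂]
  | add r₁ r₂ h₁ h₂ => simp [add_tmul, map_add, LinearMap.add_apply, h₁, h₂]

-- pattern `g` free
lemma C1 (m : A →ₗ[K] A →ₗ[K] A) (f g h : Dual K A) (r s : A ⊗[K] A) :
    pair3 f g h ((TensorProduct.map (TensorProduct.lift m) LinearMap.id)
      ((TensorProduct.tensorTensorTensorComm K A A A A) (r ⊗ₜ[K] s)))
    = g (rmap K A ((TensorProduct.comm K A A) r) (dualize m.flip (rmap K A s h) f)) := by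
  induction r using TensorProduct.induction_on with
  | zero => simp
  | tmul x y =>
    induction s using TensorProduct.induction_on with
    | zero => simp
    | tmul z w =>
      simp [tensorTensorTensorComm_tmul]
      all_goals first | exact Or.inl trivial | ring1 | (ring_nf; try simp)
    | add s₁ s₂ h₁ h₂ => simp [tmul_add, map_add, LinearMap.add_apply, h₁, h₂]
  | add r₁ r₂ h₁ h₂ => simp [add_tmul, map_add, LinearMap.add_apply, h₁, h₂]

lemma C2 (m : A →ₗ[K] A →ₗ[K] A) (f g h : Dual K A) (r s : A ⊗[K] A) :
    pair3 f g h ((TensorProduct.assoc K A A A)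
      ((TensorProduct.map LinearMap.id (TensorProduct.lift m))
        ((TensorProduct.tensorTensorTensorComm K A A A A) (r ⊗ₜ[K] s))))
    = g (rmap K A s (dualize m (rmap K A ((TensorProduct.comm K A A) r) f) h)) := by
  induction r using TensorProduct.induction_on with
  | zero => simp
  | tmul x y =>
    induction s using TensorProduct.induction_on with
    | zero => simp
    | tmul z w =>
      simp [tensorTensorTensorComm_tmul]
      all_goals first | exact Or.inl trivial | ring1 | (ring_nf; try simp)
    | add s₁ s₂ h₁ h₂ => simp [tmul_add, map_add, LinearMap.add_apply, h₁, h₂]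
  | add r₁ r₂ h₁ h₂ => simp [add_tmul, map_add, LinearMap.add_apply, h₁, h₂]

lemma C3 (m : A →ₗ[K] A →ₗ[K] A) (f g h : Dual K A) (r s : A ⊗[K] A) :
    pair3 f g h ((TensorProduct.map LinearMap.id (TensorProduct.comm K A A).toLinearMap)
      ((TensorProduct.assoc K A A A)
        ((TensorProduct.map LinearMap.id (TensorProduct.lift m))
          ((TensorProduct.tensorTensorTensorComm K A A A A)
            ((TensorProduct.map (TensorProduct.comm K A A).toLinearMap LinearMap.id)
              ((TensorProduct.tensorTensorTensorComm K A A A A) (r ⊗ₜ[K] s)))))))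
    = g (m (rmap K A r h) (rmap K A ((TensorProduct.comm K A A) s) f)) := by
  induction r using TensorProduct.induction_on with
  | zero => simp
  | tmul x y =>
    induction s using TensorProduct.induction_on with
    | zero => simp
    | tmul z w =>
      simp [tensorTensorTensorComm_tmul]
      all_goals first | exact Or.inl trivial | ring1 | (ring_nf; try simp)
    | add s₁ s₂ h₁ h₂ => simp [tmul_add, map_add, LinearMap.add_apply, h₁, h₂]
  | add r₁ r₂ h₁ h₂ => simp [add_tmul, map_add, LinearMap.add_apply, h₁, h₂]

-- pattern `h` free
lemma A1 (m : A →ₗ[K] A →ₗ[K] A) (f g h : Dual K A) (r s : A ⊗[K] A) :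
    pair3 f g h ((TensorProduct.map (TensorProduct.lift m) LinearMap.id)
      ((TensorProduct.tensorTensorTensorComm K A A A A) (r ⊗ₜ[K] s)))
    = h (rmap K A ((TensorProduct.comm K A A) s) (dualize m (rmap K A r g) f)) := by
  induction r using TensorProduct.induction_on with
  | zero => simp
  | tmul x y =>
    induction s using TensorProduct.induction_on with
    | zero => simp
    | tmul z w =>
      simp [tensorTensorTensorComm_tmul]
      all_goals first | exact Or.inl trivial | ring1 | (ring_nf; try simp)
    | add s₁ s₂ h₁ h₂ => simp [tmul_add, map_add, LinearMap.add_apply, h₁, h₂]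
  | add r₁ r₂ h₁ h₂ => simp [add_tmul, map_add, LinearMap.add_apply, h₁, h₂]

lemma A2 (m : A →ₗ[K] A →ₗ[K] A) (f g h : Dual K A) (r s : A ⊗[K] A) :
    pair3 f g h ((TensorProduct.assoc K A A A)
      ((TensorProduct.map LinearMap.id (TensorProduct.lift m))
        ((TensorProduct.tensorTensorTensorComm K A A A A) (r ⊗ₜ[K] s))))
    = h (m (rmap K A ((TensorProduct.comm K A A) r) f)
        (rmap K A ((TensorProduct.comm K A A) s) g)) := by
  induction r using TensorProduct.induction_on with
  | zero => simp
  | tmul x y =>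
    induction s using TensorProduct.induction_on with
    | zero => simp
    | tmul z w =>
      simp [tensorTensorTensorComm_tmul]
      all_goals first | exact Or.inl trivial | ring1 | (ring_nf; try simp)
    | add s₁ s₂ h₁ h₂ => simp [tmul_add, map_add, LinearMap.add_apply, h₁, h₂]
  | add r₁ r₂ h₁ h₂ => simp [add_tmul, map_add, LinearMap.add_apply, h₁, h₂]

lemma A3 (m : A →ₗ[K] A →ₗ[K] A) (f g h : Dual K A) (r s : A ⊗[K] A) :
    pair3 f g h ((TensorProduct.map LinearMap.id (TensorProduct.comm K A A).toLinearMap)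
      ((TensorProduct.assoc K A A A)
        ((TensorProduct.map LinearMap.id (TensorProduct.lift m))
          ((TensorProduct.tensorTensorTensorComm K A A A A)
            ((TensorProduct.map (TensorProduct.comm K A A).toLinearMap LinearMap.id)
              ((TensorProduct.tensorTensorTensorComm K A A A A) (r ⊗ₜ[K] s)))))))
    = h (rmap K A ((TensorProduct.comm K A A) r)
        (dualize m.flip (rmap K A ((TensorProduct.comm K A A) s) f) g)) := by
  induction r using TensorProduct.induction_on with
  | zero => simp
  | tmul x y =>
    induction s using TensorProduct.induction_on with
    | zero => simp
    | tmul z w =>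
      simp [tensorTensorTensorComm_tmul]
      all_goals first | exact Or.inl trivial | ring1 | (ring_nf; try simp)
    | add s₁ s₂ h₁ h₂ => simp [tmul_add, map_add, LinearMap.add_apply, h₁, h₂]
  | add r₁ r₂ h₁ h₂ => simp [add_tmul, map_add, LinearMap.add_apply, h₁, h₂]

/- Specializations to the diagonal `s = r`, phrased for the pinned `tprod` definitions. -/

lemma c12B (m : A →ₗ[K] A →ₗ[K] A) (f g h : Dual K A) (r : A ⊗[K] A) :
    pair3 f g h (tprod12_13 m r) = f (m (rmap K A r g) (rmap K A r h)) := B1 m f g h r r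

lemma c13B (m : A →ₗ[K] A →ₗ[K] A) (f g h : Dual K A) (r : A ⊗[K] A) :
    pair3 f g h (tprod13_23 m r)
    = f (rmap K A r (dualize m.flip (rmap K A ((TensorProduct.comm K A A) r) g) h)) :=
  B2 m f g h r r

lemma c23B (m : A →ₗ[K] A →ₗ[K] A) (f g h : Dual K A) (r : A ⊗[K] A) :
    pair3 f g h (tprod23_12 m r) = f (rmap K A r (dualize m (rmap K A r h) g)) :=
  B3 m f g h r r

lemma c12C (m : A →ₗ[K] A →ₗ[K] A) (f g h : Dual K A) (r : A ⊗[K] A) :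
    pair3 f g h (tprod12_13 m r)
    = g (rmap K A ((TensorProduct.comm K A A) r) (dualize m.flip (rmap K A r h) f)) :=
  C1 m f g h r r

lemma c13C (m : A →ₗ[K] A →ₗ[K] A) (f g h : Dual K A) (r : A ⊗[K] A) :
    pair3 f g h (tprod13_23 m r)
    = g (rmap K A r (dualize m (rmap K A ((TensorProduct.comm K A A) r) f) h)) :=
  C2 m f g h r r

lemma c23C (m : A →ₗ[K] A →ₗ[K] A) (f g h : Dual K A) (r : A ⊗[K] A) :
    pair3 f g h (tprod23_12 m r)
    = g (m (rmap K A r h) (rmap K A ((TensorProduct.comm K A A) r) f)) :=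
  C3 m f g h r r

lemma c12A (m : A →ₗ[K] A →ₗ[K] A) (f g h : Dual K A) (r : A ⊗[K] A) :
    pair3 f g h (tprod12_13 m r)
    = h (rmap K A ((TensorProduct.comm K A A) r) (dualize m (rmap K A r g) f)) :=
  A1 m f g h r r

lemma c13A (m : A →ₗ[K] A →ₗ[K] A) (f g h : Dual K A) (r : A ⊗[K] A) :
    pair3 f g h (tprod13_23 m r)
    = h (m (rmap K A ((TensorProduct.comm K A A) r) f)
        (rmap K A ((TensorProduct.comm K A A) r) g)) :=
  A2 m f g h r r

lemma c23A (m : A →ₗ[K] A →ₗ[K] A) (f g h : Dual K A) (r : A ⊗[K] A) :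
    pair3 f g h (tprod23_12 m r)
    = h (rmap K A ((TensorProduct.comm K A A) r)
        (dualize m.flip (rmap K A ((TensorProduct.comm K A A) r) f) g)) :=
  A3 m f g h r r

end Aux

/-- Theorem 3.3.3: for a symmetric `r ∈ A ⊗ A` over a finite-dimensional dendriform
algebra `(A, ≻, ≺)` with associated associative algebra `(A, *)` (`* = ≻ + ≺`), the
following are equivalent: (1) `r` solves the `D`-equation
`r₁₂ * r₁₃ = r₁₃ ≺ r₂₃ + r₂₃ ≻ r₁₂`; (2) `r` is an `O`-operator of `(A, *)` associated
to `(R_≺*, L_≻*)`; (3) equation (3.3.2); (4) equation (3.3.3). -/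
theorem D_equation_tfae
    {K A : Type*} [Field K] [CharZero K] [AddCommGroup A] [Module K A]
    [FiniteDimensional K A]
    (succ prec : A →ₗ[K] A →ₗ[K] A)
    (hdend : IsDendriform succ prec)
    (r : A ⊗[K] A)
    (hsymm : (TensorProduct.comm K A A) r = r) :
    ((tprod12_13 (succ + prec) r = tprod13_23 prec r + tprod23_12 succ r) ↔
     (∀ a b : Module.Dual K A,
        (succ + prec) (rmap K A r a) (rmap K A r b) =
          rmap K A r (dualize prec.flip (rmap K A r a) b
            + dualize succ (rmap K A r b) a))) ∧
    ((tprod12_13 (succ + prec) r = tprod13_23 prec r + tprod23_12 succ r) ↔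
     (∀ a b : Module.Dual K A,
        succ (rmap K A r a) (rmap K A r b) =
          rmap K A r (dualize (succ + prec).flip (rmap K A r a) b
            - dualize prec (rmap K A r b) a))) ∧
    ((tprod12_13 (succ + prec) r = tprod13_23 prec r + tprod23_12 succ r) ↔
     (∀ a b : Module.Dual K A,
        prec (rmap K A r a) (rmap K A r b) =
          rmap K A r (- dualize succ.flip (rmap K A r a) b
            + dualize (succ + prec) (rmap K A r b) a))) := by
  have hDiff : (tprod12_13 (succ + prec) r = tprod13_23 prec r + tprod23_12 succ r) ↔
      (∀ f g h : Dual K A,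
        pair3 f g h (tprod12_13 (succ + prec) r)
          = pair3 f g h (tprod13_23 prec r) + pair3 f g h (tprod23_12 succ r)) := by
    constructor
    · intro he f g h
      rw [he, map_add]
    · intro hp
      have h0 : tprod12_13 (succ + prec) r - (tprod13_23 prec r + tprod23_12 succ r) = 0 := by
        apply pair3_sep
        intro f g h
        simp [map_sub, map_add, hp f g h]
      exact sub_eq_zero.mp h0
  refine ⟨hDiff.trans ?_, hDiff.trans ?_, hDiff.trans ?_⟩
  · -- O-operator form (pattern with first slot free)
    constructor
    · intro hp a b
      rw [← sub_eq_zero]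
      refine (Module.forall_dual_apply_eq_zero_iff K _).mp fun φ => ?_
      have hx := hp φ a b
      rw [c12B, c13B, c23B, hsymm] at hx
      simp only [map_sub, map_add]
      linear_combination hx
    · intro hv f g h
      rw [c12B, c13B, c23B, hsymm, hv g h]
      simp only [map_add]
  · -- equation (3.3.2) (pattern with second slot free)
    constructor
    · intro hp a b
      rw [← sub_eq_zero]
      refine (Module.forall_dual_apply_eq_zero_iff K _).mp fun φ => ?_
      have hx := hp b φ a
      rw [c12C, c13C, c23C, hsymm] at hx
      simp only [map_sub, map_add]
      linear_combination -hx
    · intro hv f g h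
      rw [c12C, c13C, c23C, hsymm, hv h f]
      simp only [map_sub]
      ring
  · -- equation (3.3.3) (pattern with third slot free)
    constructor
    · intro hp a b
      rw [← sub_eq_zero]
      refine (Module.forall_dual_apply_eq_zero_iff K _).mp fun φ => ?_
      have hx := hp a b φ
      rw [c12A, c13A, c23A, hsymm] at hx
      simp only [map_add, map_neg, map_sub]
      linear_combination -hx
    · intro hv f g h
      rw [c12A, c13A, c23A, hsymm, hv f g]
      simp only [map_add, map_neg]
      ring
end

section
/- Let (A,≻,≺) be a dendriform algebra and R : A → A a Rota-Baxter operator on (A,≻,≺), i.e. R(x)≻R(y) = R(R(x)≻y + x≻R(y)) and R(x)≺R(y) = R(R(x)≺y + x≺R(y)) for all x,y ∈ A. Then the four products x↘y = R(x)≻y, x↗y = x≻R(y), x↙y = R(x)≺y, x↖y = x≺R(y) make A a quadri-algebra. -/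
open LinearMap

/-- Quadri-algebra axioms for the four products ↘ (`dse`), ↗ (`dne`), ↖ (`dnw`), ↙ (`dsw`). -/
def IsQuadri {K A : Type*} [Field K] [AddCommGroup A] [Module K A]
    (dse dne dnw dsw : A →ₗ[K] A →ₗ[K] A) : Prop :=
  (∀ x y z : A, dnw (dnw x y) z = dnw x (dse y z + dne y z + dnw y z + dsw y z)) ∧
  (∀ x y z : A, dnw (dne x y) z = dne x (dnw y z + dsw y z)) ∧
  (∀ x y z : A, dne (dne x y + dnw x y) z = dne x (dne y z + dse y z)) ∧
  (∀ x y z : A, dnw (dsw x y) z = dsw x (dne y z + dnw y z)) ∧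
  (∀ x y z : A, dnw (dse x y) z = dse x (dnw y z)) ∧
  (∀ x y z : A, dne (dse x y + dsw x y) z = dse x (dne y z)) ∧
  (∀ x y z : A, dsw (dnw x y + dsw x y) z = dsw x (dse y z + dsw y z)) ∧
  (∀ x y z : A, dsw (dne x y + dse x y) z = dse x (dsw y z)) ∧
  (∀ x y z : A, dse (dse x y + dne x y + dnw x y + dsw x y) z = dse x (dse y z))

/-- Corollary 3.4.8: a Rota-Baxter operator `R` on a dendriform algebra `(A, ≻, ≺)`
induces a quadri-algebra structure on `A` by `x↘y = R(x)≻y`, `x↗y = x≻R(y)`,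
`x↙y = R(x)≺y`, `x↖y = x≺R(y)`. -/
theorem rotaBaxter_dendriform_gives_quadri
    {K A : Type*} [Field K] [CharZero K] [AddCommGroup A] [Module K A]
    (succ prec : A →ₗ[K] A →ₗ[K] A)
    (hdend : IsDendriform succ prec)
    (R : A →ₗ[K] A)
    (hRB1 : ∀ x y : A, succ (R x) (R y) = R (succ (R x) y + succ x (R y)))
    (hRB2 : ∀ x y : A, prec (R x) (R y) = R (prec (R x) y + prec x (R y))) :
    IsQuadri (succ ∘ₗ R) (succ.compl₂ R) (prec.compl₂ R) (prec ∘ₗ R) := by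
  obtain ⟨D1, D2, D3⟩ := hdend
  refine ⟨?_, ?_, ?_, ?_, ?_, ?_, ?_, ?_, ?_⟩ <;> intro x y z <;>
    simp only [comp_apply, compl₂_apply]
  · rw [D1, hRB1, hRB2]
    simp only [map_add]; abel
  · rw [D2, hRB2]
    simp only [map_add]; abel
  · rw [← D3, hRB1]
    simp only [map_add]; abel
  · rw [D1]
  · rw [D2]
  · rw [← D3]
  · rw [add_comm (prec x (R y)), ← hRB2, D1]
  · rw [add_comm (succ x (R y)), ← hRB1, D2]
  · have h : succ (R x) y + succ x (R y) + prec x (R y) + prec (R x) y =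
        (succ (R x) y + succ x (R y)) + (prec (R x) y + prec x (R y)) := by abel
    rw [h, map_add, ← hRB1, ← hRB2, ← D3]
end

section
/- Let (A,≻,≺) be a finite-dimensional dendriform algebra with associated associative algebra (A,*), and let B be a nondegenerate symmetric 2-cocycle of (A,≻,≺). Then the four bilinear products ↘,↗,↖,↙ on A determined (via nondegeneracy of B) by B(x↘y,z) = B(y, z*x), B(x↗y,z) = −B(x, y≺z), B(x↖y,z) = B(x, y*z), B(x↙y,z) = −B(y, z≻x) for all x,y,z ∈ A make A a quadri-algebra whose associated horizontal dendriform algebra is (A,≻,≺), i.e. x≻y = x↗y + x↘y and x≺y = x↖y + x↙y for all x,y ∈ A. -/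
open LinearMap

/-- Proposition 3.4.11: if `B` is a nondegenerate symmetric 2-cocycle of a
finite-dimensional dendriform algebra `(A, ≻, ≺)` with associated associative algebra
`(A, *)`, then the four products determined by `B(x↘y, z) = B(y, z*x)`,
`B(x↗y, z) = −B(x, y≺z)`, `B(x↖y, z) = B(x, y*z)`, `B(x↙y, z) = −B(y, z≻x)` make `A` a
quadri-algebra whose associated horizontal dendriform algebra is `(A, ≻, ≺)`. -/
theorem nondeg_symmetric_two_cocycle_gives_compatible_quadri
    {K A : Type*} [Field K] [CharZero K] [AddCommGroup A] [Module K A]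
    [FiniteDimensional K A]
    (succ prec : A →ₗ[K] A →ₗ[K] A)
    (hdend : IsDendriform succ prec)
    (B : A →ₗ[K] A →ₗ[K] K)
    (hsymm : ∀ x y : A, B x y = B y x)
    (hnd : ∀ x : A, (∀ y : A, B x y = 0) → x = 0)
    (hcocycle : ∀ x y z : A,
      B (succ x y + prec x y) z = B y (prec z x) + B x (succ y z))
    (dse dne dnw dsw : A →ₗ[K] A →ₗ[K] A)
    (hse : ∀ x y z : A, B (dse x y) z = B y (succ z x + prec z x))
    (hne : ∀ x y z : A, B (dne x y) z = - B x (prec y z))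
    (hnw : ∀ x y z : A, B (dnw x y) z = B x (succ y z + prec y z))
    (hsw : ∀ x y z : A, B (dsw x y) z = - B y (succ z x)) :
    IsQuadri dse dne dnw dsw ∧
    (∀ x y : A, succ x y = dne x y + dse x y) ∧
    (∀ x y : A, prec x y = dnw x y + dsw x y) := by

  obtain ⟨hd1, hd2, hd3⟩ := hdend
  have key : ∀ u v : A, (∀ w : A, B u w = B v w) → u = v := by
    intro u v h
    have h0 : ∀ w : A, B (u - v) w = 0 := by
      intro w
      rw [map_sub, LinearMap.sub_apply, h w, sub_self]
    exact sub_eq_zero.mp (hnd _ h0)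
  have hS : ∀ x y : A, succ x y = dne x y + dse x y := by
    intro x y
    apply key; intro w
    rw [map_add, LinearMap.add_apply, hne, hse, hsymm (succ x y) w,
      hsymm y (succ w x + prec w x)]
    linear_combination -hcocycle w x y
  have hP : ∀ x y : A, prec x y = dnw x y + dsw x y := by
    intro x y
    apply key; intro w
    rw [map_add, LinearMap.add_apply, hnw, hsw, hsymm (prec x y) w,
      hsymm x (succ y w + prec y w)]
    linear_combination -hcocycle y w x
  have hM : ∀ x y : A, dse x y + dne x y + dnw x y + dsw x y = succ x y + prec x y := by
    intro x y
    rw [hS, hP]; abel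
  have hmassoc : ∀ x y z : A,
      succ (succ x y + prec x y) z + prec (succ x y + prec x y) z =
        succ x (succ y z + prec y z) + prec x (succ y z + prec y z) := by
    intro x y z
    have e1 : prec (succ x y + prec x y) z = prec (succ x y) z + prec (prec x y) z := by
      simp [map_add]
    rw [e1, ← hd3, hd2, hd1]
    simp only [map_add]
    abel
  refine ⟨⟨?_, ?_, ?_, ?_, ?_, ?_, ?_, ?_, ?_⟩, hS, hP⟩
  · -- 1
    intro x y z
    rw [hM y z]
    apply key; intro w
    simp only [hnw]
    rw [hmassoc y z w]
  · -- 2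
    intro x y z
    rw [← hP y z]
    apply key; intro w
    simp only [hnw, hne]
    rw [hd1 y z w]
  · -- 3
    intro x y z
    rw [← hS y z]
    apply key; intro w
    simp only [map_add, LinearMap.add_apply, hne, hnw, hd2]
    ring
  · -- 4
    intro x y z
    apply key; intro w
    rw [hnw, hsw, ← hd3 z w x]
    simp only [map_add, LinearMap.add_apply, hne, hnw, hsw]
    ring
  · -- 5
    intro x y z
    apply key; intro w
    simp only [hnw, hse]
    rw [hmassoc z w x]
  · -- 6
    intro x y z
    apply key; intro w
    simp only [map_add, LinearMap.add_apply, hne, hse, hsw]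
    rw [hd1 z w x]
    simp only [map_add]
    ring
  · -- 7
    intro x y z
    rw [← hP x y]
    apply key; intro w
    simp only [map_add, LinearMap.add_apply, hsw, hse]
    rw [hd2 w x y]
    ring
  · -- 8
    intro x y z
    rw [← hS x y]
    apply key; intro w
    simp only [hsw, hse]
    rw [hd3 w x y]
  · -- 9
    intro x y z
    rw [hM x y]
    apply key; intro w
    simp only [hse]
    rw [hmassoc w x y]
end
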